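/- arXiv:2210.07937 — 6 statements merged into one kernel-verified Lean document; each statement's English description precedes it below -/
import Mathlib

section
/- Let μ, γ, α, β, η, ω, θ, S, k₁, k₂ ∈ ℝ with D₁ = β + μ + η(1 + k₁) > 0, D₂ = μ + γ + α(1 + k₂) > 0 and μ + ω > 0, and set Rₑ = β·θ·S/(D₁·D₂). Let F = ![![0, θ·S, 0], ![0, 0, 0], ![0, 0, 0]] and V = ![![D₁, 0, 0], ![-β, D₂, 0], ![-η(1+k₁), -α(1+k₂), μ+ω]]. Then for every λ ∈ ℝ, det(F·V⁻¹ - λ·1) = λ²·(Rₑ - λ). -/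
open Matrix

/-- Characteristic determinant of the next-generation matrix:
`det (F·V⁻¹ - λ·1) = λ²·(Rₑ - λ)` where `Rₑ = β·θ·S/(D₁·D₂)`. -/
theorem next_generation_char_det (μ γ α β η ω θ S k₁ k₂ : ℝ)
    (D₁ D₂ : ℝ) (hD₁ : D₁ = β + μ + η * (1 + k₁)) (hD₂ : D₂ = μ + γ + α * (1 + k₂))
    (hD₁pos : 0 < D₁) (hD₂pos : 0 < D₂) (hμω : 0 < μ + ω)
    (Re : ℝ) (hRe : Re = β * θ * S / (D₁ * D₂))
    (F V : Matrix (Fin 3) (Fin 3) ℝ)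
    (hF : F = !![0, θ * S, 0; 0, 0, 0; 0, 0, 0])
    (hV : V = !![D₁, 0, 0; -β, D₂, 0; -(η * (1 + k₁)), -(α * (1 + k₂)), μ + ω]) :
    ∀ lam : ℝ, (F * V⁻¹ - lam • (1 : Matrix (Fin 3) (Fin 3) ℝ)).det
      = lam ^ 2 * (Re - lam) := by
  intro lam
  have hdetV : V.det = D₁ * D₂ * (μ + ω) := by
    subst hV; simp [Matrix.det_fin_three]
  have hdet0 : V.det ≠ 0 := by
    rw [hdetV]; positivity
  have hVinv : IsUnit V.det := isUnit_iff_ne_zero.mpr hdet0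
  have key : F * V⁻¹ - lam • (1 : Matrix (Fin 3) (Fin 3) ℝ)
      = (F - lam • V) * V⁻¹ := by
    rw [Matrix.sub_mul, Matrix.smul_mul, Matrix.mul_nonsing_inv V hVinv]
  rw [key, Matrix.det_mul, Matrix.det_nonsing_inv, Ring.inverse_eq_inv']
  have hdetFV : (F - lam • V).det
      = -(lam ^ 2) * (μ + ω) * (β * θ * S - lam * (D₁ * D₂)) * (-1) := by
    subst hF hV
    simp [Matrix.det_fin_three, Matrix.sub_apply, Matrix.smul_apply]
    ring
  rw [hdetFV, hdetV, hRe]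
  have h1 : D₁ ≠ 0 := ne_of_gt hD₁pos
  have h2 : D₂ ≠ 0 := ne_of_gt hD₂pos
  have h3 : μ + ω ≠ 0 := ne_of_gt hμω
  field_simp
end

section
/- Let μ, γ, α, β, η, ω, θ, S, k₁, k₂ ∈ ℝ with D₁ = β + μ + η(1 + k₁) > 0, D₂ = μ + γ + α(1 + k₂) > 0 and μ + ω > 0, and set Rₑ = β·θ·S/(D₁·D₂). Let F = ![![0, θ·S, 0], ![0, 0, 0], ![0, 0, 0]] and V = ![![D₁, 0, 0], ![-β, D₂, 0], ![-η(1+k₁), -α(1+k₂), μ+ω]]. Then a nonzero real number λ is an eigenvalue of F·V⁻¹ (i.e., there exists a nonzero vector v with (F·V⁻¹)·v = λ·v) if and only if λ = Rₑ and Rₑ ≠ 0. -/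
open Matrix

/-- A nonzero real number `lam` is an eigenvalue of the next-generation matrix
`F·V⁻¹` if and only if `lam = Rₑ` and `Rₑ ≠ 0`. -/
theorem next_generation_eigenvalue (μ γ α β η ω θ S k₁ k₂ : ℝ)
    (D₁ D₂ : ℝ) (hD₁ : D₁ = β + μ + η * (1 + k₁)) (hD₂ : D₂ = μ + γ + α * (1 + k₂))
    (hD₁pos : 0 < D₁) (hD₂pos : 0 < D₂) (hμω : 0 < μ + ω)
    (Re : ℝ) (hRe : Re = β * θ * S / (D₁ * D₂))
    (F V : Matrix (Fin 3) (Fin 3) ℝ)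
    (hF : F = !![0, θ * S, 0; 0, 0, 0; 0, 0, 0])
    (hV : V = !![D₁, 0, 0; -β, D₂, 0; -(η * (1 + k₁)), -(α * (1 + k₂)), μ + ω]) :
    ∀ lam : ℝ, lam ≠ 0 →
      ((∃ v : Fin 3 → ℝ, v ≠ 0 ∧ (F * V⁻¹).mulVec v = lam • v) ↔
        (lam = Re ∧ Re ≠ 0)) := by
  have h1 : D₁ ≠ 0 := ne_of_gt hD₁pos
  have h2 : D₂ ≠ 0 := ne_of_gt hD₂pos
  have h3 : μ + ω ≠ 0 := ne_of_gt hμω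
  have hVW : V * !![1/D₁, 0, 0;
       β/(D₁*D₂), 1/D₂, 0;
       (η*(1+k₁)*D₂ + β*α*(1+k₂))/(D₁*D₂*(μ+ω)), α*(1+k₂)/(D₂*(μ+ω)), 1/(μ+ω)] = 1 := by
    rw [hV, Matrix.mul_fin_three, Matrix.one_fin_three]
    ext i j
    fin_cases i <;> fin_cases j <;> simp [Matrix.vecHead, Matrix.vecTail] <;> field_simp <;> ring
  have hVinv : V⁻¹ = !![1/D₁, 0, 0;
       β/(D₁*D₂), 1/D₂, 0;
       (η*(1+k₁)*D₂ + β*α*(1+k₂))/(D₁*D₂*(μ+ω)), α*(1+k₂)/(D₂*(μ+ω)), 1/(μ+ω)] :=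
    Matrix.inv_eq_right_inv hVW
  have hM : F * V⁻¹ = !![Re, θ*S/D₂, 0; 0, 0, 0; 0, 0, 0] := by
    rw [hF, hVinv, Matrix.mul_fin_three]
    ext i j
    fin_cases i <;> fin_cases j <;> simp [hRe, Matrix.vecHead, Matrix.vecTail] <;> field_simp <;> ring
  intro lam hlam
  constructor
  · rintro ⟨v, hv, hmv⟩
    have h0 := congrFun hmv 0
    have ha := congrFun hmv 1
    have hb := congrFun hmv 2
    simp [hM, Matrix.mulVec, dotProduct, Fin.sum_univ_three, Matrix.vecHead, Matrix.vecTail] at h0 ha hb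
    have hv1 : v 1 = 0 := ha.resolve_left hlam
    have hv2 : v 2 = 0 := hb.resolve_left hlam
    have hv0 : v 0 ≠ 0 := by
      intro h
      apply hv
      funext i; fin_cases i <;> simp [h, hv1, hv2]
    rw [hv1] at h0
    have hlR : Re = lam := by
      have h0' : Re * v 0 = lam * v 0 := by linarith [h0]
      rcases mul_eq_mul_right_iff.mp h0' with h | h
      · exact h
      · exact absurd h hv0
    exact ⟨hlR.symm, hlR ▸ hlam⟩
  · rintro ⟨h, hRne⟩
    refine ⟨![1, 0, 0], ?_, ?_⟩
    · intro hc
      have := congrFun hc 0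
      simp at this
    · funext i
      fin_cases i <;>
        simp [hM, Matrix.mulVec, dotProduct, Fin.sum_univ_three, Matrix.vecHead, Matrix.vecTail, h]
end

section
/- Let μ, υ, δ, ω, β, γ, α, η, ψ, k₁, k₂ ∈ ℝ with μ > 0, μ + υ > 0, μ + ω > 0, μ + δ > 0, and set D₁ = μ + β + η(1 + k₁), D₂ = μ + γ + α(1 + k₂). Let J be the 6×6 real Jacobian matrix J = ![![-(μ+υ),0,0,0,0,0], ![υ,-μ,0,-ψ,0,δ], ![0,0,-D₁,ψ,0,0], ![0,0,β,-D₂,0,0], ![0,0,η(1+k₁),α(1+k₂),-(μ+ω),0], ![0,0,0,0,ω,-(μ+δ)]]. Then 0 is an eigenvalue of J (i.e., det J = 0) if and only if ψ·β = D₁·D₂, i.e., if and only if the effective reproduction number Rₑ = ψβ/(D₁D₂) equals 1. -/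
open Matrix

/-- The Jacobian of the gonorrhoea model at the disease-free equilibrium has a
zero eigenvalue (`det J = 0`) if and only if `ψ·β = D₁·D₂`, i.e. iff the
effective reproduction number `Rₑ = ψβ/(D₁D₂)` equals `1`. -/
theorem jacobian_zero_eigenvalue_iff (μ υ δ ω β γ α η ψ k₁ k₂ : ℝ)
    (hμ : 0 < μ) (hμυ : 0 < μ + υ) (hμω : 0 < μ + ω) (hμδ : 0 < μ + δ)
    (D₁ D₂ : ℝ) (hD₁ : D₁ = μ + β + η * (1 + k₁)) (hD₂ : D₂ = μ + γ + α * (1 + k₂))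
    (J : Matrix (Fin 6) (Fin 6) ℝ)
    (hJ : J = !![-(μ + υ), 0, 0, 0, 0, 0;
                 υ, -μ, 0, -ψ, 0, δ;
                 0, 0, -D₁, ψ, 0, 0;
                 0, 0, β, -D₂, 0, 0;
                 0, 0, η * (1 + k₁), α * (1 + k₂), -(μ + ω), 0;
                 0, 0, 0, 0, ω, -(μ + δ)]) :
    J.det = 0 ↔ ψ * β = D₁ * D₂ := by
  subst hJ
  have hpos : 0 < (μ + υ) * μ * (μ + ω) * (μ + δ) := by positivity
  have hdet : (!![-(μ + υ), 0, 0, 0, 0, 0;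
                 υ, -μ, 0, -ψ, 0, δ;
                 0, 0, -D₁, ψ, 0, 0;
                 0, 0, β, -D₂, 0, 0;
                 0, 0, η * (1 + k₁), α * (1 + k₂), -(μ + ω), 0;
                 0, 0, 0, 0, ω, -(μ + δ)] : Matrix (Fin 6) (Fin 6) ℝ).det
      = (μ + υ) * μ * (μ + ω) * (μ + δ) * (D₁ * D₂ - ψ * β) := by
    set_option maxRecDepth 4000 in
    simp [Matrix.det_succ_row_zero, Fin.sum_univ_succ, Fin.succAbove]
    ring
  rw [hdet]
  constructor
  · intro h
    rcases mul_eq_zero.mp h with h' | h'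
    · exact absurd h' (ne_of_gt hpos)
    · linarith
  · intro h
    rw [h, sub_self, mul_zero]
end

section
/- Let μ, υ, δ, ω, β, γ, α, η, ψ, k₁, k₂ ∈ ℝ and set D₁ = μ + β + η(1 + k₁), D₂ = μ + γ + α(1 + k₂). Let J be the 6×6 real matrix J = ![![-(μ+υ),0,0,0,0,0], ![υ,-μ,0,-ψ,0,δ], ![0,0,-D₁,ψ,0,0], ![0,0,β,-D₂,0,0], ![0,0,η(1+k₁),α(1+k₂),-(μ+ω),0], ![0,0,0,0,ω,-(μ+δ)]]. Then the characteristic polynomial of J factors as charpoly J = (X + C(μ+υ))·(X + C μ)·(X + C(μ+ω))·(X + C(μ+δ))·(X² + C(D₁+D₂)·X + C(D₁·D₂ - ψ·β)), where C denotes the constant-polynomial embedding ℝ → ℝ[X]. -/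
open Matrix Polynomial

theorem aux_cons_val_five {α : Type*} {n : ℕ} (x : α) (u : Fin (n + 5) → α) :
    Matrix.vecCons x u 5 = u 4 := rfl

set_option maxHeartbeats 4000000 in
set_option maxRecDepth 10000 in
/-- Factorization of the characteristic polynomial of the Jacobian of the
gonorrhoea model with controls at the disease-free equilibrium. -/
theorem jacobian_charpoly_factorization (μ υ δ ω β γ α η ψ k₁ k₂ : ℝ)
    (D₁ D₂ : ℝ) (hD₁ : D₁ = μ + β + η * (1 + k₁)) (hD₂ : D₂ = μ + γ + α * (1 + k₂))
    (J : Matrix (Fin 6) (Fin 6) ℝ)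
    (hJ : J = !![-(μ + υ), 0, 0, 0, 0, 0;
                 υ, -μ, 0, -ψ, 0, δ;
                 0, 0, -D₁, ψ, 0, 0;
                 0, 0, β, -D₂, 0, 0;
                 0, 0, η * (1 + k₁), α * (1 + k₂), -(μ + ω), 0;
                 0, 0, 0, 0, ω, -(μ + δ)]) :
    J.charpoly = (X + C (μ + υ)) * (X + C μ) * (X + C (μ + ω)) * (X + C (μ + δ)) *
      (X ^ 2 + C (D₁ + D₂) * X + C (D₁ * D₂ - ψ * β)) := by
  subst hJ
  rw [Matrix.charpoly]
  have h : charmatrix (!![-(μ + υ), 0, 0, 0, 0, 0;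
                 υ, -μ, 0, -ψ, 0, δ;
                 0, 0, -D₁, ψ, 0, 0;
                 0, 0, β, -D₂, 0, 0;
                 0, 0, η * (1 + k₁), α * (1 + k₂), -(μ + ω), 0;
                 0, 0, 0, 0, ω, -(μ + δ)]) =
      !![X + C (μ + υ), 0, 0, 0, 0, 0;
         -C υ, X + C μ, 0, C ψ, 0, -C δ;
         0, 0, X + C D₁, -C ψ, 0, 0;
         0, 0, -C β, X + C D₂, 0, 0;
         0, 0, -C (η * (1 + k₁)), -C (α * (1 + k₂)), X + C (μ + ω), 0;
         0, 0, 0, 0, -C ω, X + C (μ + δ)] := by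
    refine Matrix.ext fun i j => ?_
    fin_cases i <;> fin_cases j <;>
      simp [charmatrix_apply_eq, charmatrix_apply_ne, aux_cons_val_five, map_neg,
        Matrix.vecHead, Matrix.vecTail] <;> ring
  rw [h]
  simp [Matrix.det_succ_row_zero, Fin.sum_univ_succ, Fin.succAbove,
    aux_cons_val_five]
  ring
end

section
/- Let μ, υ, δ, ω, β, γ, α, η, ψ, k₁, k₂ ∈ ℝ with μ > 0, μ + υ > 0, μ + ω > 0, μ + δ > 0, D₁ = μ + β + η(1 + k₁) > 0, D₂ = μ + γ + α(1 + k₂) > 0, and suppose ψ·β < D₁·D₂ (i.e., effective reproduction number Rₑ = ψβ/(D₁D₂) < 1). Let J be the 6×6 real matrix J = ![![-(μ+υ),0,0,0,0,0], ![υ,-μ,0,-ψ,0,δ], ![0,0,-D₁,ψ,0,0], ![0,0,β,-D₂,0,0], ![0,0,η(1+k₁),α(1+k₂),-(μ+ω),0], ![0,0,0,0,ω,-(μ+δ)]]. Then every complex eigenvalue z of J (i.e., every root z ∈ ℂ of the characteristic polynomial of J) satisfies Re z < 0. -/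
open Matrix Polynomial

set_option maxHeartbeats 4000000 in
set_option maxRecDepth 20000 in
/-- Evaluation of the characteristic polynomial of the Jacobian at a complex number. -/
theorem dfe_charpoly_eval_aux (a b c d e f ψ β υ δ η α : ℝ) (J : Matrix (Fin 6) (Fin 6) ℝ)
    (ω : ℝ)
    (hJ : J = !![-a, 0, 0, 0, 0, 0;
                 υ, -b, 0, -ψ, 0, δ;
                 0, 0, -c, ψ, 0, 0;
                 0, 0, β, -d, 0, 0;
                 0, 0, η, α, -e, 0;
                 0, 0, 0, 0, ω, -f]) (z : ℂ) :
    aeval z J.charpoly =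
      (z+a)*(z+b)*(z+e)*(z+f)*((z+c)*(z+d) - (ψ:ℂ)*β) := by
  have h1 : aeval z J.charpoly = ((charmatrix J).map (aeval z)).det := by
    rw [Matrix.charpoly]
    exact AlgHom.map_det (aeval z) _
  have h2 : (charmatrix J).map (aeval z) =
      !![z+a, 0, 0, 0, 0, 0;
         -(υ:ℂ), z+b, 0, (ψ:ℂ), 0, -(δ:ℂ);
         0, 0, z+c, -(ψ:ℂ), 0, 0;
         0, 0, -(β:ℂ), z+d, 0, 0;
         0, 0, -(η:ℂ), -(α:ℂ), z+e, 0;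
         0, 0, 0, 0, -(ω:ℂ), z+f] := by
    subst hJ
    ext i j
    fin_cases i <;> fin_cases j <;>
      simp [charmatrix_apply_eq, charmatrix_apply_ne, Matrix.map_apply,
        Matrix.vecHead, Matrix.vecTail] <;>
      simp [show (5 : Fin 6) = (4 : Fin 5).succ from rfl, Matrix.cons_val_succ,
        Matrix.vecHead, Matrix.vecTail]
  rw [h1, h2]
  simp [Matrix.det_succ_row_zero, Fin.sum_univ_succ, Matrix.submatrix_apply, Fin.succAbove]
  ring

/-- A complex root of a linear factor `z + a` with `a > 0` has negative real part. -/
theorem lin_root_re_neg (a : ℝ) (ha : 0 < a) (z : ℂ) (h : z + (a:ℂ) = 0) : z.re < 0 := by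
  have : z.re + a = 0 := by
    have := congrArg Complex.re h
    simpa using this
  linarith

/-- A complex root of `(z+c)(z+d) = ψβ` with `c, d > 0` and `ψβ < cd` has negative
real part. -/
theorem quad_root_re_neg (c d ψ β : ℝ) (hc : 0 < c) (hd : 0 < d) (hR : ψ * β < c * d)
    (z : ℂ) (h : (z + (c:ℂ)) * (z + (d:ℂ)) - (ψ:ℂ) * β = 0) : z.re < 0 := by
  set x := z.re
  set y := z.im
  have hre : (x + c) * (x + d) - y * y - ψ * β = 0 := by
    have := congrArg Complex.re h
    simpa [Complex.mul_re, Complex.add_re, Complex.add_im] using this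
  have him : (x + c) * y + y * (x + d) = 0 := by
    have := congrArg Complex.im h
    simpa [Complex.mul_im, Complex.add_re, Complex.add_im] using this
  by_contra hx
  push_neg at hx
  have hy : y = 0 := by
    rcases mul_eq_zero.mp (show y * ((x + c) + (x + d)) = 0 by linarith) with h' | h'
    · exact h'
    · nlinarith
  rw [hy] at hre
  nlinarith

/-- Local asymptotic stability of the disease-free equilibrium: if `Rₑ < 1`
(i.e. `ψ·β < D₁·D₂`) then every complex eigenvalue of the Jacobian `J` has
strictly negative real part. -/
theorem dfe_locally_asymptotically_stable (μ υ δ ω β γ α η ψ k₁ k₂ : ℝ)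
    (hμ : 0 < μ) (hμυ : 0 < μ + υ) (hμω : 0 < μ + ω) (hμδ : 0 < μ + δ)
    (D₁ D₂ : ℝ) (hD₁ : D₁ = μ + β + η * (1 + k₁)) (hD₂ : D₂ = μ + γ + α * (1 + k₂))
    (hD₁pos : 0 < D₁) (hD₂pos : 0 < D₂) (hR : ψ * β < D₁ * D₂)
    (J : Matrix (Fin 6) (Fin 6) ℝ)
    (hJ : J = !![-(μ + υ), 0, 0, 0, 0, 0;
                 υ, -μ, 0, -ψ, 0, δ;
                 0, 0, -D₁, ψ, 0, 0;
                 0, 0, β, -D₂, 0, 0;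
                 0, 0, η * (1 + k₁), α * (1 + k₂), -(μ + ω), 0;
                 0, 0, 0, 0, ω, -(μ + δ)]) :
    ∀ z : ℂ, aeval z J.charpoly = 0 → z.re < 0 := by
  intro z hz
  have key := dfe_charpoly_eval_aux (μ + υ) μ D₁ D₂ (μ + ω) (μ + δ) ψ β υ δ
    (η * (1 + k₁)) (α * (1 + k₂)) J ω hJ z
  rw [hz] at key
  have h0 := key.symm
  rcases mul_eq_zero.mp h0 with h | h
  · rcases mul_eq_zero.mp h with h | h
    · rcases mul_eq_zero.mp h with h | h
      · rcases mul_eq_zero.mp h with h | h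
        · exact lin_root_re_neg _ hμυ z h
        · exact lin_root_re_neg _ hμ z h
      · exact lin_root_re_neg _ hμω z h
    · exact lin_root_re_neg _ hμδ z h
  · exact quad_root_re_neg D₁ D₂ ψ β hD₁pos hD₂pos hR z h
end

section
/- Let μ, υ, δ, ω, β, γ, α, η, ψ, k₁, k₂ ∈ ℝ with D₁ = μ + β + η(1 + k₁) > 0, D₂ = μ + γ + α(1 + k₂) > 0, and suppose ψ·β > D₁·D₂ (i.e., effective reproduction number Rₑ = ψβ/(D₁D₂) > 1). Let J be the 6×6 real matrix J = ![![-(μ+υ),0,0,0,0,0], ![υ,-μ,0,-ψ,0,δ], ![0,0,-D₁,ψ,0,0], ![0,0,β,-D₂,0,0], ![0,0,η(1+k₁),α(1+k₂),-(μ+ω),0], ![0,0,0,0,ω,-(μ+δ)]]. Then J has a strictly positive real eigenvalue, namely a real root λ > 0 of λ² + (D₁+D₂)·λ + (D₁·D₂ - ψ·β) = 0. -/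
open Matrix

private lemma cons_val_five' {α : Type*} (x : α) (u : Fin 5 → α) :
    Matrix.vecCons x u 5 = u 4 := rfl

set_option maxRecDepth 10000 in
set_option maxHeartbeats 1000000 in
/-- Instability of the disease-free equilibrium when `Rₑ > 1`: if
`ψ·β > D₁·D₂` then the Jacobian `J` has a strictly positive real eigenvalue,
namely a positive real root of `λ² + (D₁+D₂)λ + (D₁D₂ - ψβ) = 0`. -/
theorem dfe_unstable_of_Re_gt_one (μ υ δ ω β γ α η ψ k₁ k₂ : ℝ)
    (D₁ D₂ : ℝ) (hD₁ : D₁ = μ + β + η * (1 + k₁)) (hD₂ : D₂ = μ + γ + α * (1 + k₂))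
    (hD₁pos : 0 < D₁) (hD₂pos : 0 < D₂) (hR : D₁ * D₂ < ψ * β)
    (J : Matrix (Fin 6) (Fin 6) ℝ)
    (hJ : J = !![-(μ + υ), 0, 0, 0, 0, 0;
                 υ, -μ, 0, -ψ, 0, δ;
                 0, 0, -D₁, ψ, 0, 0;
                 0, 0, β, -D₂, 0, 0;
                 0, 0, η * (1 + k₁), α * (1 + k₂), -(μ + ω), 0;
                 0, 0, 0, 0, ω, -(μ + δ)]) :
    ∃ lam : ℝ, 0 < lam ∧
      lam ^ 2 + (D₁ + D₂) * lam + (D₁ * D₂ - ψ * β) = 0 ∧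
      ∃ v : Fin 6 → ℝ, v ≠ 0 ∧ J.mulVec v = lam • v := by
  have ha : 0 < D₁ + D₂ := by linarith
  have hdisc : 0 < (D₁ + D₂) ^ 2 - 4 * (D₁ * D₂ - ψ * β) := by nlinarith
  set s : ℝ := Real.sqrt ((D₁ + D₂) ^ 2 - 4 * (D₁ * D₂ - ψ * β)) with hs_def
  have hsnn : 0 ≤ s := Real.sqrt_nonneg _
  have hs2 : s ^ 2 = (D₁ + D₂) ^ 2 - 4 * (D₁ * D₂ - ψ * β) :=
    Real.sq_sqrt (le_of_lt hdisc)
  have hsa : D₁ + D₂ < s := by nlinarith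
  set lam : ℝ := (-(D₁ + D₂) + s) / 2 with hlam_def
  have hlampos : 0 < lam := by
    rw [hlam_def]; linarith
  have hroot : lam ^ 2 + (D₁ + D₂) * lam + (D₁ * D₂ - ψ * β) = 0 := by
    rw [hlam_def]; linear_combination hs2 / 4
  refine ⟨lam, hlampos, hroot, ?_⟩
  set N : Matrix (Fin 6) (Fin 6) ℝ :=
    !![-(μ + υ) - lam, 0, 0, 0, 0, 0;
       υ, -μ - lam, 0, -ψ, 0, δ;
       0, 0, -D₁ - lam, ψ, 0, 0;
       0, 0, β, -D₂ - lam, 0, 0;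
       0, 0, η * (1 + k₁), α * (1 + k₂), -(μ + ω) - lam, 0;
       0, 0, 0, 0, ω, -(μ + δ) - lam] with hN
  have hJN : J = N + lam • 1 := by
    rw [hJ, hN]
    ext i j
    fin_cases i <;> fin_cases j <;>
      simp [Matrix.one_apply, cons_val_five']
  have hdetN : N.det = 0 := by
    have hexp : N.det = (-(μ + υ) - lam) * (-μ - lam) *
        ((-D₁ - lam) * (-D₂ - lam) - ψ * β) *
        ((-(μ + ω) - lam) * (-(μ + δ) - lam)) := by
      rw [hN]
      simp [Matrix.det_succ_row_zero, Fin.sum_univ_succ, Matrix.submatrix_apply,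
        Fin.succAbove]
      ring
    rw [hexp]
    have : (-D₁ - lam) * (-D₂ - lam) - ψ * β = 0 := by linear_combination hroot
    rw [this]; ring
  obtain ⟨v, hv0, hv⟩ := (Matrix.exists_mulVec_eq_zero_iff).mpr hdetN
  refine ⟨v, hv0, ?_⟩
  rw [hJN, Matrix.add_mulVec, hv, Matrix.smul_mulVec, Matrix.one_mulVec, zero_add]
end
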